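/- arXiv:2311.14023 — 3 statements merged into one kernel-verified Lean document; each statement's English description precedes it below -/
import Mathlib

section
/- Let A and Â be n×n real SPSD matrices with A ⪰ Â ⪰ 0, let 1 ≤ k < n and ε ≥ 0, and suppose that ‖A − Â_(k)‖_* ≤ (1+ε)‖A − A_(k)‖_*. Then for every continuous operator monotone function f : [0,∞) → [0,∞), ‖f(A) − f(Â)_(k)‖_* ≤ (1+ε)‖f(A) − f(A)_(k)‖_*. -/
open Matrix BigOperators

/-- `M = U * diagonal μ * Uᵀ` is a spectral (eigen)decomposition of the symmetric matrix `M`,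
with orthogonal `U` and eigenvalues `μ` listed in nonincreasing order. -/
def IsSpectralDecomp {n : ℕ} (M U : Matrix (Fin n) (Fin n) ℝ) (μ : Fin n → ℝ) : Prop :=
  Uᵀ * U = 1 ∧ Antitone μ ∧ M = U * Matrix.diagonal μ * Uᵀ

/-- Truncation of a spectral decomposition to its `k` largest (first `k`) eigenvalues:
the best rank-`k` approximation `M_(k)` associated with the decomposition `(U, μ)`. -/
noncomputable def trunc {n : ℕ} (k : ℕ) (U : Matrix (Fin n) (Fin n) ℝ) (μ : Fin n → ℝ) :
    Matrix (Fin n) (Fin n) ℝ :=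
  U * Matrix.diagonal (fun i : Fin n => if (i : ℕ) < k then μ i else 0) * Uᵀ

/-- `f` is operator monotone on SPSD matrices: for all `m` and all `m × m` SPSD matrices
`B ⪰ C ⪰ 0`, one has `f(B) ⪰ f(C)`, where matrix functions are computed through (any)
spectral decomposition. -/
def OperatorMonotone (f : ℝ → ℝ) : Prop :=
  ∀ (m : ℕ) (B C U V : Matrix (Fin m) (Fin m) ℝ) (β γ : Fin m → ℝ),
    IsSpectralDecomp B U β → IsSpectralDecomp C V γ →
    B.PosSemidef → C.PosSemidef → (B - C).PosSemidef →
    (U * Matrix.diagonal (f ∘ β) * Uᵀ - V * Matrix.diagonal (f ∘ γ) * Vᵀ).PosSemidef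

/-- Squared Frobenius norm `‖M‖_F² = Σ_{i,j} M_{ij}²`. -/
noncomputable def frobSq {m l : ℕ} (M : Matrix (Fin m) (Fin l) ℝ) : ℝ :=
  ∑ i, ∑ j, (M i j) ^ 2

/-- Frobenius norm. -/
noncomputable def frobNorm {m l : ℕ} (M : Matrix (Fin m) (Fin l) ℝ) : ℝ :=
  Real.sqrt (frobSq M)

/-- The eigenvalues of a Hermitian matrix listed in nonincreasing order:
`eigsDesc hM i` is the `(i+1)`-st largest eigenvalue of `M`. -/
noncomputable def eigsDesc {m : ℕ} {M : Matrix (Fin m) (Fin m) ℝ} (hM : M.IsHermitian) :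
    Fin m → ℝ :=
  fun i => (hM.eigenvalues ∘ Tuple.sort hM.eigenvalues) i.rev

/-- The singular values of `M` in nonincreasing order: `svDesc M i` is the `(i+1)`-st largest
singular value of `M`, i.e. the square root of the `(i+1)`-st largest eigenvalue of `MᴴM`. -/
noncomputable def svDesc {m l : ℕ} (M : Matrix (Fin m) (Fin l) ℝ) : Fin l → ℝ :=
  fun i => Real.sqrt (eigsDesc (show (Mᵀ * M).IsHermitian by
    have h := Matrix.isHermitian_conjTranspose_mul_self M
    rwa [Matrix.conjTranspose_eq_transpose_of_trivial] at h) i)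

/-- Nuclear norm: the sum of the singular values. -/
noncomputable def nuclearNorm {m l : ℕ} (M : Matrix (Fin m) (Fin l) ℝ) : ℝ :=
  ∑ i, svDesc M i

/-- Operator (spectral) norm: the largest singular value. -/
noncomputable def opNorm {m l : ℕ} (M : Matrix (Fin m) (Fin l) ℝ) : ℝ :=
  ⨆ i, svDesc M i

/-- `p`-th power of the Schatten `p`-norm: `‖M‖_(p)^p = Σᵢ σᵢ(M)^p`. -/
noncomputable def schattenPow {m l : ℕ} (p : ℝ) (M : Matrix (Fin m) (Fin l) ℝ) : ℝ :=
  ∑ i, svDesc M i ^ p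

/-- Schatten `p`-norm: `‖M‖_(p) = (Σᵢ σᵢ(M)^p)^(1/p)`. -/
noncomputable def schattenNorm {m l : ℕ} (p : ℝ) (M : Matrix (Fin m) (Fin l) ℝ) : ℝ :=
  (schattenPow p M) ^ (1 / p)

/-- `P` is the orthogonal projection onto the column space of `M`. -/
def IsOrthProjOnto {m l : ℕ} (P : Matrix (Fin m) (Fin m) ℝ) (M : Matrix (Fin m) (Fin l) ℝ) :
    Prop :=
  Pᵀ = P ∧ P * P = P ∧ P * M = M ∧ ∃ Y : Matrix (Fin l) (Fin m) ℝ, P = M * Y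


section NystromAux
open Polynomial

variable {n : ℕ}

lemma orth_comm {P : Matrix (Fin n) (Fin n) ℝ} (hP : Pᵀ * P = 1) : P * Pᵀ = 1 :=
  mul_eq_one_comm.mp hP

lemma charpoly_orth_conj (P A : Matrix (Fin n) (Fin n) ℝ) (hP : Pᵀ * P = 1) :
    (P * A * Pᵀ).charpoly = A.charpoly := by
  have hP' : P * Pᵀ = 1 := orth_comm hP
  have hmapP : (P * Pᵀ).map (C : ℝ →+* ℝ[X]) = P.map C * Pᵀ.map C := Matrix.map_mul
  have hX : (Matrix.scalar (Fin n) (X : ℝ[X])) = (X : ℝ[X]) • (1 : Matrix (Fin n) (Fin n) ℝ[X]) := by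
    ext i j
    by_cases h : i = j <;> simp [Matrix.scalar_apply, Matrix.one_apply, h]
  have hcm : Matrix.charmatrix (P * A * Pᵀ) = (P.map C) * Matrix.charmatrix A * (Pᵀ.map C) := by
    unfold Matrix.charmatrix
    simp only [RingHom.mapMatrix_apply]
    rw [Matrix.mul_sub, Matrix.sub_mul, hX]
    congr 1
    · rw [mul_smul_comm, smul_mul_assoc, mul_one, ← hmapP, hP',
        Matrix.map_one _ (map_zero C) (map_one C)]
    · rw [Matrix.map_mul, Matrix.map_mul]
  have h1 : (P.map (C : ℝ →+* ℝ[X])).det * (Pᵀ.map C).det = 1 := by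
    rw [← Matrix.det_mul, ← hmapP, hP', Matrix.map_one _ (map_zero C) (map_one C), Matrix.det_one]
  rw [Matrix.charpoly, Matrix.charpoly, hcm, Matrix.det_mul, Matrix.det_mul]
  calc (P.map (C:ℝ →+* ℝ[X])).det * (Matrix.charmatrix A).det * (Pᵀ.map C).det
      = ((P.map (C:ℝ →+* ℝ[X])).det * (Pᵀ.map C).det) * (Matrix.charmatrix A).det := by ring
    _ = (Matrix.charmatrix A).det := by rw [h1, one_mul]

lemma charpoly_decomp (W : Matrix (Fin n) (Fin n) ℝ) (g : Fin n → ℝ) (hW : Wᵀ * W = 1) :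
    (W * Matrix.diagonal g * Wᵀ).charpoly = ∏ i, (X - C (g i)) := by
  rw [charpoly_orth_conj _ _ hW,
    Matrix.charpoly_of_upperTriangular _ (Matrix.blockTriangular_diagonal g)]
  simp

lemma multiset_of_charpoly_eq {a b : Fin n → ℝ}
    (h : (∏ i, (X - C (a i))) = ∏ i, (X - C (b i))) :
    Multiset.map a Finset.univ.val = Multiset.map b Finset.univ.val := by
  have ha := Polynomial.roots_multiset_prod_X_sub_C (Multiset.map a Finset.univ.val)
  have hb := Polynomial.roots_multiset_prod_X_sub_C (Multiset.map b Finset.univ.val)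
  rw [Multiset.map_map] at ha hb
  have hpa : ((Multiset.map (fun i => X - C (a i)) Finset.univ.val)).prod = ∏ i, (X - C (a i)) := rfl
  have hpb : ((Multiset.map (fun i => X - C (b i)) Finset.univ.val)).prod = ∏ i, (X - C (b i)) := rfl
  rw [Function.comp_def] at ha hb
  rw [hpa] at ha
  rw [hpb] at hb
  rw [h] at ha
  exact ha.symm.trans hb

lemma sum_comp_of_multiset_eq {a b : Fin n → ℝ}
    (h : Multiset.map a Finset.univ.val = Multiset.map b Finset.univ.val) (φ : ℝ → ℝ) :
    ∑ i, φ (a i) = ∑ i, φ (b i) := by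
  have h2 : Multiset.map (φ ∘ a) Finset.univ.val = Multiset.map (φ ∘ b) Finset.univ.val := by
    rw [← Multiset.map_map φ a, ← Multiset.map_map φ b, h]
  calc ∑ i, φ (a i) = (Multiset.map (φ ∘ a) Finset.univ.val).sum := rfl
    _ = (Multiset.map (φ ∘ b) Finset.univ.val).sum := by rw [h2]
    _ = ∑ i, φ (b i) := rfl

lemma spectral_decomp_real {M : Matrix (Fin n) (Fin n) ℝ} (hM : M.IsHermitian) :
    ∃ W : Matrix (Fin n) (Fin n) ℝ, Wᵀ * W = 1 ∧
      M = W * Matrix.diagonal hM.eigenvalues * Wᵀ := by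
  have hspec := hM.spectral_theorem
  set W' : Matrix (Fin n) (Fin n) ℝ := (Matrix.IsHermitian.eigenvectorUnitary hM :
      Matrix (Fin n) (Fin n) ℝ) with hW'def
  have hWmem := (Matrix.IsHermitian.eigenvectorUnitary hM).2
  have hW'unit : star W' * W' = 1 := Matrix.mem_unitaryGroup_iff'.mp hWmem
  have hW' : W'ᵀ * W' = 1 := by
    rw [← Matrix.conjTranspose_eq_transpose_of_trivial, ← Matrix.star_eq_conjTranspose]
    exact hW'unit
  refine ⟨W', hW', ?_⟩
  rw [Unitary.conjStarAlgAut_apply, Matrix.star_eq_conjTranspose,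
    Matrix.conjTranspose_eq_transpose_of_trivial] at hspec
  simpa [RCLike.ofReal_real_eq_id] using hspec

lemma sum_phi_eigs {M : Matrix (Fin n) (Fin n) ℝ} (hM : M.IsHermitian)
    (W : Matrix (Fin n) (Fin n) ℝ) (g : Fin n → ℝ) (hW : Wᵀ * W = 1)
    (hMW : M = W * Matrix.diagonal g * Wᵀ) (φ : ℝ → ℝ) :
    ∑ i, φ (hM.eigenvalues i) = ∑ i, φ (g i) := by
  obtain ⟨W', hW', hspec'⟩ := spectral_decomp_real hM
  have h1 : M.charpoly = ∏ i, (X - C (hM.eigenvalues i)) := by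
    conv_lhs => rw [hspec']
    exact charpoly_decomp W' _ hW'
  have h2 : M.charpoly = ∏ i, (X - C (g i)) := by
    rw [hMW]; exact charpoly_decomp W g hW
  exact sum_comp_of_multiset_eq (multiset_of_charpoly_eq (h1 ▸ h2 ▸ rfl)) φ

lemma trace_decomp (W : Matrix (Fin n) (Fin n) ℝ) (g : Fin n → ℝ) (hW : Wᵀ * W = 1) :
    (W * Matrix.diagonal g * Wᵀ).trace = ∑ i, g i := by
  rw [Matrix.trace_mul_cycle, hW, one_mul, Matrix.trace_diagonal]

lemma psd_decomp (W : Matrix (Fin n) (Fin n) ℝ) (g : Fin n → ℝ) (hg : ∀ i, 0 ≤ g i) :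
    (W * Matrix.diagonal g * Wᵀ).PosSemidef := by
  have h : (Matrix.diagonal g).PosSemidef := Matrix.posSemidef_diagonal_iff.mpr hg
  have h2 := h.mul_mul_conjTranspose_same W
  rwa [Matrix.conjTranspose_eq_transpose_of_trivial] at h2

lemma eigs_nonneg_of_decomp {A W : Matrix (Fin n) (Fin n) ℝ} {g : Fin n → ℝ}
    (hA : A.PosSemidef) (hW : Wᵀ * W = 1) (hA' : A = W * Matrix.diagonal g * Wᵀ) :
    ∀ i, 0 ≤ g i := by
  have h1 : Wᵀ * A * W = Matrix.diagonal g := by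
    rw [hA', Matrix.mul_assoc, Matrix.mul_assoc, Matrix.mul_assoc, hW, Matrix.mul_one,
      ← Matrix.mul_assoc, hW, one_mul]
  have h2 := hA.conjTranspose_mul_mul_same W
  rw [Matrix.conjTranspose_eq_transpose_of_trivial, h1] at h2
  exact Matrix.posSemidef_diagonal_iff.mp h2

lemma nuclearNorm_decomp (W : Matrix (Fin n) (Fin n) ℝ) (h : Fin n → ℝ)
    (hW : Wᵀ * W = 1) (hh : ∀ i, 0 ≤ h i) :
    nuclearNorm (W * Matrix.diagonal h * Wᵀ) = ∑ i, h i := by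
  set M := W * Matrix.diagonal h * Wᵀ with hMdef
  have hMt : Mᵀ * M = W * Matrix.diagonal (fun i => h i * h i) * Wᵀ := by
    have hT : Mᵀ = W * Matrix.diagonal h * Wᵀ := by
      rw [hMdef, Matrix.transpose_mul, Matrix.transpose_mul, Matrix.diagonal_transpose,
        Matrix.transpose_transpose, Matrix.mul_assoc]
    rw [hT, hMdef]
    calc (W * Matrix.diagonal h * Wᵀ) * (W * Matrix.diagonal h * Wᵀ)
        = W * Matrix.diagonal h * ((Wᵀ * W) * (Matrix.diagonal h * Wᵀ)) := by
          simp only [Matrix.mul_assoc]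
      _ = W * (Matrix.diagonal h * Matrix.diagonal h) * Wᵀ := by
          rw [hW, one_mul]; simp only [Matrix.mul_assoc]
      _ = W * Matrix.diagonal (fun i => h i * h i) * Wᵀ := by
          rw [Matrix.diagonal_mul_diagonal]
  have hherm : (Mᵀ * M).IsHermitian := by
    have h := Matrix.isHermitian_conjTranspose_mul_self M
    rwa [Matrix.conjTranspose_eq_transpose_of_trivial] at h
  have key : ∑ i, Real.sqrt (hherm.eigenvalues i) = ∑ i, h i := by
    have := sum_phi_eigs hherm W (fun i => h i * h i) hW hMt Real.sqrt
    rw [this]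
    exact Finset.sum_congr rfl fun i _ => Real.sqrt_mul_self (hh i)
  rw [← key]
  unfold nuclearNorm svDesc eigsDesc
  exact Equiv.sum_comp (Fin.revPerm.trans (Tuple.sort hherm.eigenvalues))
    (fun j => Real.sqrt (hherm.eigenvalues j))

lemma nuclearNorm_psd {M : Matrix (Fin n) (Fin n) ℝ} (hM : M.PosSemidef) :
    nuclearNorm M = M.trace := by
  obtain ⟨W, hW, hMW⟩ := spectral_decomp_real hM.1
  have h0 : ∀ i, 0 ≤ hM.1.eigenvalues i := fun i => hM.eigenvalues_nonneg i
  calc nuclearNorm M = nuclearNorm (W * Matrix.diagonal hM.1.eigenvalues * Wᵀ) := by rw [← hMW]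
    _ = ∑ i, hM.1.eigenvalues i := nuclearNorm_decomp W _ hW h0
    _ = (W * Matrix.diagonal hM.1.eigenvalues * Wᵀ).trace := (trace_decomp W _ hW).symm
    _ = M.trace := by rw [← hMW]

lemma antitone_fin2 (x y : ℝ) (h : y ≤ x) : Antitone (![x, y] : Fin 2 → ℝ) := by
  intro i j hij
  fin_cases i <;> fin_cases j <;> simp_all

lemma psd_fin2 {p q r : ℝ} (hp : 0 ≤ p) (hr : 0 ≤ r) (hdet : q ^ 2 ≤ p * r) :
    (!![p, q; q, r]).PosSemidef := by
  rw [Matrix.posSemidef_iff_dotProduct_mulVec]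
  constructor
  · ext i j
    fin_cases i <;> fin_cases j <;> simp [Matrix.conjTranspose_apply]
  · intro x
    have hx : star x = x := by funext i; simp
    rw [hx]
    have : dotProduct x ((!![p, q; q, r]) *ᵥ x) =
        p * x 0 ^ 2 + 2 * q * (x 0 * x 1) + r * x 1 ^ 2 := by
      simp [Matrix.mulVec, dotProduct, Fin.sum_univ_two]
      ring
    rw [this]
    rcases eq_or_lt_of_le hp with hp0 | hp0
    · have hq : q = 0 := by nlinarith [sq_nonneg q]
      rw [hq, ← hp0]
      nlinarith [sq_nonneg (x 1)]
    · nlinarith [sq_nonneg (p * x 0 + q * x 1), mul_nonneg (sub_nonneg.mpr hdet) (sq_nonneg (x 1))]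

lemma psd_det_nonneg {m : ℕ} {M : Matrix (Fin m) (Fin m) ℝ} (hM : M.PosSemidef) : 0 ≤ M.det := by
  rw [hM.isHermitian.det_eq_prod_eigenvalues]
  exact Finset.prod_nonneg fun i _ => by simpa using hM.eigenvalues_nonneg i

lemma mono_of_opmono (f : ℝ → ℝ) (hf : OperatorMonotone f) :
    ∀ x y : ℝ, 0 ≤ x → x ≤ y → f x ≤ f y := by
  intro x y hx hxy
  have hdecB : IsSpectralDecomp (Matrix.diagonal (fun _ : Fin 1 => y)) 1 (fun _ => y) :=
    ⟨by simp, antitone_const, by simp⟩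
  have hdecC : IsSpectralDecomp (Matrix.diagonal (fun _ : Fin 1 => x)) 1 (fun _ => x) :=
    ⟨by simp, antitone_const, by simp⟩
  have hB : (Matrix.diagonal (fun _ : Fin 1 => y)).PosSemidef :=
    Matrix.posSemidef_diagonal_iff.mpr fun _ => by linarith
  have hC : (Matrix.diagonal (fun _ : Fin 1 => x)).PosSemidef :=
    Matrix.posSemidef_diagonal_iff.mpr fun _ => hx
  have hBC : (Matrix.diagonal (fun _ : Fin 1 => y) -
      Matrix.diagonal (fun _ : Fin 1 => x)).PosSemidef := by
    rw [Matrix.diagonal_sub]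
    exact Matrix.posSemidef_diagonal_iff.mpr fun _ => by linarith
  have hres := hf 1 _ _ 1 1 _ _ hdecB hdecC hB hC hBC
  simp only [Matrix.transpose_one, Matrix.one_mul, Matrix.mul_one, Matrix.diagonal_sub] at hres
  have := Matrix.posSemidef_diagonal_iff.mp hres 0
  simp at this
  linarith

lemma c2w (f : ℝ → ℝ) (hf : OperatorMonotone f) (hnn : ∀ x : ℝ, 0 ≤ x → 0 ≤ f x) :
    ∀ a d b w : ℝ, 0 ≤ d → d ≤ a → 0 ≤ b → 0 ≤ w → w ≤ 1 → b * w ≤ a → b * (1 - w) ≤ d →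
      b * (a * (1 - w) + d * w) ≤ a * d →
      f b * (f a * (1 - w) + f d * w) ≤ f a * f d := by
  intro a d b w hd hda hb hw0 hw1 hbw hbw' hkey
  set c : ℝ := Real.sqrt w with hc
  set s : ℝ := Real.sqrt (1 - w) with hs
  have hcc : c * c = w := Real.mul_self_sqrt hw0
  have hss : s * s = 1 - w := Real.mul_self_sqrt (by linarith)
  set R : Matrix (Fin 2) (Fin 2) ℝ := !![c, -s; s, c] with hR
  have hRT : Rᵀ = !![c, s; -s, c] := by
    ext i j; fin_cases i <;> fin_cases j <;> simp [hR]
  have hdiag2 : ∀ x y : ℝ, Matrix.diagonal ![x, y] = !![x, 0; 0, y] := by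
    intro x y; ext i j; fin_cases i <;> fin_cases j <;> simp [Matrix.diagonal]
  have hRorth : Rᵀ * R = 1 := by
    rw [hRT, hR, Matrix.mul_fin_two, Matrix.one_fin_two]
    ext i j; fin_cases i <;> fin_cases j <;> simp <;> nlinarith [hcc, hss]
  set B : Matrix (Fin 2) (Fin 2) ℝ := Matrix.diagonal ![a, d] with hB
  set C : Matrix (Fin 2) (Fin 2) ℝ := R * Matrix.diagonal ![b, 0] * Rᵀ with hC
  have hdecB : IsSpectralDecomp B 1 ![a, d] := ⟨by simp, antitone_fin2 a d hda, by simp [hB]⟩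
  have hdecC : IsSpectralDecomp C R ![b, 0] := ⟨hRorth, antitone_fin2 b 0 hb, rfl⟩
  have hpsdB : B.PosSemidef := Matrix.posSemidef_diagonal_iff.mpr fun i => by
    fin_cases i <;> simp <;> linarith
  have hpsdC : C.PosSemidef := psd_decomp R ![b, 0] fun i => by fin_cases i <;> simp [hb]
  have hBCmat : B - C = !![a - b * (c * c), -(b * (c * s)); -(b * (c * s)), d - b * (s * s)] := by
    rw [hB, hC, hRT, hR, hdiag2, hdiag2, Matrix.mul_fin_two, Matrix.mul_fin_two]
    ext i j; fin_cases i <;> fin_cases j <;> simp <;> ring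
  have hpsdBC : (B - C).PosSemidef := by
    rw [hBCmat]
    apply psd_fin2 (by rw [hcc]; linarith) (by rw [hss]; linarith)
    have h1 : (-(b * (c * s))) ^ 2 = b ^ 2 * w * (1 - w) := by
      have e : (-(b * (c * s))) ^ 2 = b ^ 2 * (c * c) * (s * s) := by ring
      rw [e, hcc, hss]
    rw [h1, hcc, hss]
    nlinarith [hkey]
  have hres := hf 2 B C 1 R ![a, d] ![b, 0] hdecB hdecC hpsdB hpsdC hpsdBC
  have hcomp1 : (f ∘ ![a, d]) = ![f a, f d] := by funext i; fin_cases i <;> simp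
  have hcomp2 : (f ∘ ![b, 0]) = ![f b, f 0] := by funext i; fin_cases i <;> simp
  rw [hcomp1, hcomp2] at hres
  have hpsd2 : (R * Matrix.diagonal ![(0:ℝ), f 0] * Rᵀ).PosSemidef :=
    psd_decomp R ![0, f 0] fun i => by fin_cases i <;> simp [hnn 0 le_rfl]
  have hM3 := hres.add hpsd2
  have hM3mat : 1 * Matrix.diagonal ![f a, f d] * (1:Matrix (Fin 2) (Fin 2) ℝ)ᵀ -
      R * Matrix.diagonal ![f b, f 0] * Rᵀ + R * Matrix.diagonal ![(0:ℝ), f 0] * Rᵀ =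
      !![f a - f b * (c * c), -(f b * (c * s)); -(f b * (c * s)), f d - f b * (s * s)] := by
    simp only [Matrix.transpose_one, Matrix.one_mul, Matrix.mul_one]
    rw [hRT, hR, hdiag2, hdiag2, hdiag2, Matrix.mul_fin_two, Matrix.mul_fin_two,
      Matrix.mul_fin_two, Matrix.mul_fin_two]
    ext i j; fin_cases i <;> fin_cases j <;> simp <;> ring
  rw [hM3mat] at hM3
  have hdet := psd_det_nonneg hM3
  rw [Matrix.det_fin_two_of] at hdet
  have h2 : (-(f b * (c * s))) * (-(f b * (c * s))) = f b ^ 2 * w * (1 - w) := by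
    have e : (-(f b * (c * s))) * (-(f b * (c * s))) = f b ^ 2 * (c * c) * (s * s) := by ring
    rw [e, hcc, hss]
  rw [h2, hcc, hss] at hdet
  nlinarith [hdet]

lemma ratio_lemma (f : ℝ → ℝ) (hnn : ∀ x : ℝ, 0 ≤ x → 0 ≤ f x)
    (hmono : ∀ x y : ℝ, 0 ≤ x → x ≤ y → f x ≤ f y)
    (hc2 : ∀ a d b w : ℝ, 0 ≤ d → d ≤ a → 0 ≤ b → 0 ≤ w → w ≤ 1 → b * w ≤ a → b * (1 - w) ≤ d →
      b * (a * (1 - w) + d * w) ≤ a * d →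
      f b * (f a * (1 - w) + f d * w) ≤ f a * f d) :
    ∀ p q : ℝ, 0 < p → p ≤ q → p * f q ≤ q * f p := by
  intro p q hp hpq
  have hq : 0 < q := lt_of_lt_of_le hp hpq
  rcases le_or_gt (f q) 0 with hfq | hfq
  · have h0 : f q = 0 := le_antisymm hfq (hnn q hq.le)
    rw [h0, mul_zero]
    exact mul_nonneg hq.le (hnn p hp.le)
  · have key : ∀ T : ℝ, q ≤ T → f q * (p / q - p / T) ≤ f p := by
      intro T hT
      have hT0 : 0 < T := lt_of_lt_of_le hq hT
      set w : ℝ := 1 - (p / q - p / T) with hwdef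
      have h1w : 1 - w = p / q - p / T := by rw [hwdef]; ring
      have hpq1 : p / q ≤ 1 := (div_le_one hq).mpr hpq
      have hptq : p / T ≤ p / q := by gcongr
      have hpt0 : 0 ≤ p / T := by positivity
      have hw0 : 0 ≤ w := by rw [hwdef]; nlinarith
      have hw1 : w ≤ 1 := by rw [hwdef]; nlinarith
      have c3 : q * w ≤ T := le_trans (mul_le_of_le_one_right hq.le hw1) hT
      have e2 : q * (1 - w) = p - q * p / T := by rw [h1w]; field_simp
      have c4 : q * (1 - w) ≤ p := by
        rw [e2]
        have : 0 ≤ q * p / T := by positivity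
        linarith
      have c5 : q * (T * (1 - w) + p * w) ≤ T * p := by
        have e6 : q * (T * (1 - w) + p * w) = T * (q * (1 - w)) + p * (q * w) := by ring
        have e5 : T * (p - q * p / T) = T * p - q * p := by field_simp
        rw [e6, e2, e5]
        nlinarith [mul_le_mul_of_nonneg_left (mul_le_of_le_one_right hq.le hw1) hp.le]
      have hres := hc2 T p q w hp.le (le_trans hpq hT) hq.le hw0 hw1 c3 c4 c5
      have hfT : 0 < f T := lt_of_lt_of_le hfq (hmono q T hq.le hT)
      have hdrop : f q * f T * (1 - w) ≤ f T * f p := by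
        have hnn2 : 0 ≤ f q * (f p * w) :=
          mul_nonneg (hnn q hq.le) (mul_nonneg (hnn p hp.le) hw0)
        nlinarith [hres]
      have := le_of_mul_le_mul_right (by nlinarith [hdrop] : f q * (1 - w) * f T ≤ f p * f T) hfT
      rwa [h1w] at this
    have htend : Filter.Tendsto (fun T : ℝ => f q * (p / q - p / T)) Filter.atTop
        (nhds (f q * (p / q - 0))) := by
      apply Filter.Tendsto.const_mul
      apply Filter.Tendsto.const_sub
      have h := tendsto_inv_atTop_zero.const_mul p
      rw [mul_zero] at h
      exact h.congr fun x => (div_eq_mul_inv p x).symm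
    have hfinal : f q * (p / q - 0) ≤ f p := by
      apply le_of_tendsto htend
      filter_upwards [Filter.eventually_ge_atTop q] with T hT
      exact key T hT
    rw [sub_zero] at hfinal
    have hmul := mul_le_mul_of_nonneg_left hfinal hq.le
    have e : q * (f q * (p / q)) = p * f q := by field_simp
    rw [e] at hmul
    nlinarith [hmul]

lemma dot_mulVec_left (U : Matrix (Fin n) (Fin n) ℝ) (x z : Fin n → ℝ) :
    x ⬝ᵥ (U *ᵥ z) = (Uᵀ *ᵥ x) ⬝ᵥ z := by
  have h := Matrix.vecMul_transpose Uᵀ x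
  rw [Matrix.transpose_transpose] at h
  rw [Matrix.dotProduct_mulVec, h]

lemma dot_mm (M N : Matrix (Fin n) (Fin n) ℝ) (u w : Fin n → ℝ) :
    (M *ᵥ u) ⬝ᵥ (N *ᵥ w) = u ⬝ᵥ ((Mᵀ * N) *ᵥ w) := by
  rw [Matrix.dotProduct_mulVec, Matrix.vecMul_mulVec, ← Matrix.dotProduct_mulVec]

lemma sum_cutoff {n m : ℕ} (hmn : m + 1 ≤ n) (F : Fin n → ℝ) (g : Fin (m + 1) → ℝ) :
    (∑ t : Fin n, F t * (if h : (t : ℕ) < m + 1 then g ⟨t, h⟩ else 0))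
      = ∑ s : Fin (m + 1), F (Fin.castLE hmn s) * g s := by
  classical
  set F' : ℕ → ℝ := fun t => if h : t < n then F ⟨t, h⟩ else 0 with hF'
  set G : ℕ → ℝ := fun t => if h : t < m + 1 then g ⟨t, h⟩ else 0 with hG
  have h1 : (∑ t : Fin n, F t * (if h : (t : ℕ) < m + 1 then g ⟨t, h⟩ else 0))
      = ∑ t ∈ Finset.range n, F' t * G t := by
    rw [← Fin.sum_univ_eq_sum_range (fun t => F' t * G t) n]
    refine Finset.sum_congr rfl fun t _ => ?_
    have ht : (t : ℕ) < n := t.isLt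
    simp only [hF', hG, ht, dif_pos, Fin.eta]
  have h2 : (∑ t ∈ Finset.range n, F' t * G t) = ∑ t ∈ Finset.range (m + 1), F' t * G t := by
    refine (Finset.sum_subset (Finset.range_subset_range.mpr hmn) fun t _ ht => ?_).symm
    have : ¬ t < m + 1 := by simpa using ht
    simp only [hG, dif_neg this, mul_zero]
  have h3 : (∑ t ∈ Finset.range (m + 1), F' t * G t)
      = ∑ s : Fin (m + 1), F (Fin.castLE hmn s) * g s := by
    rw [← Fin.sum_univ_eq_sum_range (fun t => F' t * G t) (m + 1)]
    refine Finset.sum_congr rfl fun s _ => ?_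
    have hs1 : (s : ℕ) < m + 1 := s.isLt
    have hs2 : (s : ℕ) < n := lt_of_lt_of_le hs1 hmn
    simp only [hF', hG, hs1, hs2, dif_pos, Fin.eta]
    congr 1
  rw [h1, h2, h3]

lemma weyl {A B U V : Matrix (Fin n) (Fin n) ℝ} {μ ν : Fin n → ℝ}
    (hU : Uᵀ * U = 1) (hV : Vᵀ * V = 1)
    (hAeq : A = U * Matrix.diagonal μ * Uᵀ) (hBeq : B = V * Matrix.diagonal ν * Vᵀ)
    (hμa : Antitone μ) (hνa : Antitone ν) (hAB : (A - B).PosSemidef) :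
    ∀ i, ν i ≤ μ i := by
  intro i
  classical
  set m := (i : ℕ) with hm
  have hm1n : m + 1 ≤ n := i.isLt
  have hmn : m ≤ n := le_of_lt i.isLt
  set Q : Matrix (Fin m) (Fin (m + 1)) ℝ :=
    Matrix.of (fun j t => (Uᵀ * V) (Fin.castLE hmn j) (Fin.castLE hm1n t)) with hQ
  have hninj : ¬ Function.Injective Q.mulVecLin := by
    intro hinj
    have hle := LinearMap.finrank_le_finrank_of_injective hinj
    rw [Module.finrank_fin_fun, Module.finrank_fin_fun] at hle
    omega
  obtain ⟨x1, x2, heq, hne⟩ := Function.not_injective_iff.mp hninj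
  set g : Fin (m + 1) → ℝ := x1 - x2 with hgdef
  have hg0 : g ≠ 0 := sub_ne_zero.mpr hne
  have hQg : Q *ᵥ g = 0 := by
    rw [hgdef, Matrix.mulVec_sub]
    rw [Matrix.mulVecLin_apply, Matrix.mulVecLin_apply] at heq
    rw [heq, sub_self]
  set d : Fin n → ℝ := fun t => if h : (t : ℕ) < m + 1 then g ⟨t, h⟩ else 0 with hd
  set x : Fin n → ℝ := V *ᵥ d with hx
  set cvec : Fin n → ℝ := (Uᵀ * V) *ᵥ d with hcvec
  have hc0 : ∀ j : Fin n, (j : ℕ) < m → cvec j = 0 := by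
    intro j hj
    have hcj : cvec j = ∑ t : Fin n, (Uᵀ * V) j t * d t := by
      simp [hcvec, Matrix.mulVec, dotProduct]
    have hcut := sum_cutoff hm1n ((Uᵀ * V) j) g
    have hQrow : (Q *ᵥ g) ⟨(j : ℕ), hj⟩
        = ∑ s : Fin (m + 1), (Uᵀ * V) j (Fin.castLE hm1n s) * g s := by
      have heqj : Fin.castLE hmn (⟨(j : ℕ), hj⟩ : Fin m) = j := by
        apply Fin.ext; rfl
      simp [hQ, Matrix.mulVec, dotProduct, heqj]
    rw [hcj, hcut, ← hQrow, hQg]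
    rfl
  have hBV : Vᵀ * (B * V) = Matrix.diagonal ν := by
    rw [hBeq, Matrix.mul_assoc (V * Matrix.diagonal ν) Vᵀ V, hV, Matrix.mul_one,
      ← Matrix.mul_assoc, hV, one_mul]
  have hxBx : x ⬝ᵥ (B *ᵥ x) = ∑ t, ν t * d t ^ 2 := by
    rw [hx, Matrix.mulVec_mulVec, dot_mm]
    rw [hBV]
    simp [Matrix.mulVec_diagonal, dotProduct]
    exact Finset.sum_congr rfl fun t _ => by ring
  have hxAx : x ⬝ᵥ (A *ᵥ x) = ∑ t, μ t * cvec t ^ 2 := by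
    have hAx : A *ᵥ x = U *ᵥ (Matrix.diagonal μ *ᵥ (Uᵀ *ᵥ x)) := by
      rw [hAeq]
      simp only [hx, Matrix.mulVec_mulVec]
      congr 1
      simp [Matrix.mul_assoc]
    have hUx : Uᵀ *ᵥ x = cvec := by
      rw [hx, hcvec, Matrix.mulVec_mulVec]
    rw [hAx, hUx, dot_mulVec_left, hUx]
    simp [Matrix.mulVec_diagonal, dotProduct]
    exact Finset.sum_congr rfl fun t _ => by ring
  have hcc : cvec ⬝ᵥ cvec = d ⬝ᵥ d := by
    have h1 : cvec = Uᵀ *ᵥ x := by rw [hx, hcvec, Matrix.mulVec_mulVec]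
    rw [h1, dot_mm, Matrix.transpose_transpose, orth_comm hU, Matrix.one_mulVec, hx, dot_mm, hV,
      Matrix.one_mulVec]
  have hBlow : ν i * (d ⬝ᵥ d) ≤ ∑ t, ν t * d t ^ 2 := by
    have hdd : d ⬝ᵥ d = ∑ t, d t ^ 2 := by
      simp [dotProduct]; exact Finset.sum_congr rfl fun t _ => by ring
    have hterm : ∀ t : Fin n, 0 ≤ (ν t - ν i) * d t ^ 2 := by
      intro t
      by_cases h : (t : ℕ) < m + 1
      · have hti : t ≤ i := by
          rw [Fin.le_def]; omega
        have := hνa hti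
        exact mul_nonneg (by linarith) (sq_nonneg _)
      · have : d t = 0 := by simp only [hd, dif_neg h]
        rw [this]; simp
    have := Finset.sum_nonneg fun t (_ : t ∈ Finset.univ) => hterm t
    rw [hdd, Finset.mul_sum]
    have hsub : ∑ t, (ν t - ν i) * d t ^ 2 = ∑ t, ν t * d t ^ 2 - ∑ t, ν i * d t ^ 2 := by
      rw [← Finset.sum_sub_distrib]
      exact Finset.sum_congr rfl fun t _ => by ring
    rw [hsub] at this
    linarith
  have hAup : ∑ t, μ t * cvec t ^ 2 ≤ μ i * (cvec ⬝ᵥ cvec) := by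
    have hcc2 : cvec ⬝ᵥ cvec = ∑ t, cvec t ^ 2 := by
      simp [dotProduct]; exact Finset.sum_congr rfl fun t _ => by ring
    have hterm : ∀ t : Fin n, 0 ≤ (μ i - μ t) * cvec t ^ 2 := by
      intro t
      by_cases h : (t : ℕ) < m
      · rw [hc0 t h]; simp
      · have hit : i ≤ t := by rw [Fin.le_def]; omega
        have := hμa hit
        exact mul_nonneg (by linarith) (sq_nonneg _)
    have := Finset.sum_nonneg fun t (_ : t ∈ Finset.univ) => hterm t
    rw [hcc2, Finset.mul_sum]
    have hsub : ∑ t, (μ i - μ t) * cvec t ^ 2 = ∑ t, μ i * cvec t ^ 2 - ∑ t, μ t * cvec t ^ 2 := by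
      rw [← Finset.sum_sub_distrib]
      exact Finset.sum_congr rfl fun t _ => by ring
    rw [hsub] at this
    linarith
  have hpos : 0 < d ⬝ᵥ d := by
    have hdd : d ⬝ᵥ d = ∑ t, d t ^ 2 := by
      simp [dotProduct]; exact Finset.sum_congr rfl fun t _ => by ring
    rw [hdd]
    obtain ⟨s, hs⟩ := Function.ne_iff.mp hg0
    apply Finset.sum_pos' (fun t _ => sq_nonneg _)
    refine ⟨Fin.castLE hm1n s, Finset.mem_univ _, ?_⟩
    have hds : d (Fin.castLE hm1n s) = g s := by
      have h1 : ((Fin.castLE hm1n s : Fin n) : ℕ) < m + 1 := s.isLt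
      simp only [hd, h1, dif_pos]
      exact congrArg g (Fin.ext rfl)
    rw [hds]
    have : g s ≠ 0 := by simpa using hs
    positivity
  have hxx : x ⬝ᵥ (B *ᵥ x) ≤ x ⬝ᵥ (A *ᵥ x) := by
    have h0 := hAB.dotProduct_mulVec_nonneg x
    have hstar : star x = x := by funext t; simp
    rw [hstar, Matrix.sub_mulVec, dotProduct_sub] at h0
    linarith
  have hfin : ν i * (d ⬝ᵥ d) ≤ μ i * (d ⬝ᵥ d) := by
    rw [← hcc]
    calc ν i * (cvec ⬝ᵥ cvec) ≤ ∑ t, ν t * d t ^ 2 := by rw [hcc]; exact hBlow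
      _ = x ⬝ᵥ (B *ᵥ x) := hxBx.symm
      _ ≤ x ⬝ᵥ (A *ᵥ x) := hxx
      _ = ∑ t, μ t * cvec t ^ 2 := hxAx
      _ ≤ μ i * (cvec ⬝ᵥ cvec) := hAup
  exact le_of_mul_le_mul_left
    (by rw [mul_comm (ν i), mul_comm (μ i)] at hfin; exact hfin) hpos

lemma sum_split (k : ℕ) (g : Fin n → ℝ) :
    ∑ i : Fin n, g i = (∑ i : Fin n, (if (i : ℕ) < k then g i else 0))
      + ∑ i : Fin n, (if (i : ℕ) < k then 0 else g i) := by
  rw [← Finset.sum_add_distrib]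
  exact Finset.sum_congr rfl fun i _ => by split_ifs <;> ring

lemma sum_ite_sub (k : ℕ) (g h : Fin n → ℝ) :
    (∑ i : Fin n, (if (i : ℕ) < k then g i - h i else 0))
      = (∑ i : Fin n, (if (i : ℕ) < k then g i else 0))
        - ∑ i : Fin n, (if (i : ℕ) < k then h i else 0) := by
  rw [← Finset.sum_sub_distrib]
  exact Finset.sum_congr rfl fun i _ => by split_ifs <;> ring

lemma key_scalar {k : ℕ} (hkn : k < n) (f : ℝ → ℝ) (μ ν : Fin n → ℝ)
    (hμa : Antitone μ) (hμ0 : ∀ i, 0 ≤ μ i) (hν0 : ∀ i, 0 ≤ ν i) (hw : ∀ i, ν i ≤ μ i)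
    (hnn : ∀ x : ℝ, 0 ≤ x → 0 ≤ f x)
    (hratio : ∀ p q : ℝ, 0 < p → p ≤ q → p * f q ≤ q * f p)
    (ε : ℝ) (hε : 0 ≤ ε)
    (hsum : (∑ i : Fin n, (if (i : ℕ) < k then μ i - ν i else 0))
        ≤ ε * ∑ i : Fin n, (if (i : ℕ) < k then 0 else μ i)) :
    (∑ i : Fin n, (if (i : ℕ) < k then f (μ i) - f (ν i) else 0))
      ≤ ε * ∑ i : Fin n, (if (i : ℕ) < k then 0 else f (μ i)) := by
  set K : Fin n := ⟨k, hkn⟩ with hK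
  have hrhs0 : 0 ≤ ∑ i : Fin n, (if (i : ℕ) < k then 0 else f (μ i)) :=
    Finset.sum_nonneg fun i _ => by split_ifs; exacts [le_rfl, hnn _ (hμ0 i)]
  rcases eq_or_lt_of_le (hμ0 K) with hK0 | hK0
  · have hμ0' : ∀ j : Fin n, ¬ ((j : ℕ) < k) → μ j = 0 := by
      intro j hj
      have hKj : K ≤ j := by rw [Fin.le_def]; simp [hK]; omega
      have h1 := hμa hKj
      have h2 := hμ0 j
      rw [← hK0] at h1
      linarith
    have hrhs : (∑ i : Fin n, (if (i : ℕ) < k then 0 else μ i)) = 0 :=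
      Finset.sum_eq_zero fun i _ => by
        split_ifs with h
        · rfl
        · exact hμ0' i h
    rw [hrhs, mul_zero] at hsum
    have hterm0 : ∀ i : Fin n, i ∈ Finset.univ → 0 ≤ (if (i : ℕ) < k then μ i - ν i else 0) := by
      intro i _; split_ifs; exacts [by linarith [hw i], le_rfl]
    have hall := (Finset.sum_eq_zero_iff_of_nonneg hterm0).mp
      (le_antisymm hsum (Finset.sum_nonneg hterm0))
    have hlhs : (∑ i : Fin n, (if (i : ℕ) < k then f (μ i) - f (ν i) else 0)) = 0 :=
      Finset.sum_eq_zero fun i _ => by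
        have h3 := hall i (Finset.mem_univ i)
        split_ifs with h
        · rw [if_pos h] at h3
          have h4 : μ i = ν i := by linarith
          rw [h4, sub_self]
        · rfl
    rw [hlhs]
    exact mul_nonneg hε hrhs0
  · have step1 : ∀ i : Fin n, (i : ℕ) < k →
        (f (μ i) - f (ν i)) * μ K ≤ f (μ K) * (μ i - ν i) := by
      intro i hi
      have hiK : i ≤ K := by rw [Fin.le_def]; simp [hK]; omega
      have hμiK : μ K ≤ μ i := hμa hiK
      have hμi0 : 0 < μ i := lt_of_lt_of_le hK0 hμiK
      have h2 : μ K * f (μ i) ≤ μ i * f (μ K) := hratio (μ K) (μ i) hK0 hμiK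
      rcases eq_or_lt_of_le (hν0 i) with hνi0 | hνi0
      · have h3 : 0 ≤ f (ν i) := hnn _ (hν0 i)
        have h4 : f (μ K) * (μ i - ν i) = f (μ K) * μ i := by rw [← hνi0]; ring
        rw [h4]
        nlinarith [h2, mul_nonneg hK0.le h3]
      · have h1 : ν i * f (μ i) ≤ μ i * f (ν i) := hratio (ν i) (μ i) hνi0 (hw i)
        nlinarith [mul_le_mul_of_nonneg_left h1 hK0.le,
          mul_le_mul_of_nonneg_right h2 (by linarith [hw i] : (0:ℝ) ≤ μ i - ν i), hμi0]
    have sum1 : (∑ i : Fin n, (if (i : ℕ) < k then f (μ i) - f (ν i) else 0)) * μ K ≤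
        f (μ K) * ∑ i : Fin n, (if (i : ℕ) < k then μ i - ν i else 0) := by
      rw [Finset.sum_mul, Finset.mul_sum]
      apply Finset.sum_le_sum
      intro i _
      split_ifs with h
      · exact step1 i h
      · simp
    have step2 : ∀ j : Fin n, ¬ ((j : ℕ) < k) → f (μ K) * μ j ≤ μ K * f (μ j) := by
      intro j hj
      rcases eq_or_lt_of_le (hμ0 j) with h0 | h0
      · rw [← h0, mul_zero]
        exact mul_nonneg hK0.le (hnn 0 le_rfl)
      · have hjK : K ≤ j := by rw [Fin.le_def]; simp [hK]; omega
        have hμjK : μ j ≤ μ K := hμa hjK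
        have := hratio (μ j) (μ K) h0 hμjK
        linarith [this]
    have sum2 : f (μ K) * (∑ i : Fin n, (if (i : ℕ) < k then 0 else μ i)) ≤
        μ K * ∑ i : Fin n, (if (i : ℕ) < k then 0 else f (μ i)) := by
      rw [Finset.mul_sum, Finset.mul_sum]
      apply Finset.sum_le_sum
      intro i _
      split_ifs with h
      · simp
      · exact step2 i h
    have hfμK0 : 0 ≤ f (μ K) := hnn _ hK0.le
    have hc1 := mul_le_mul_of_nonneg_left hsum hfμK0
    have hc3 := mul_le_mul_of_nonneg_left sum2 hε
    have hfin : (∑ i : Fin n, (if (i : ℕ) < k then f (μ i) - f (ν i) else 0)) * μ K ≤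
        (ε * ∑ i : Fin n, (if (i : ℕ) < k then 0 else f (μ i))) * μ K := by
      calc (∑ i : Fin n, (if (i : ℕ) < k then f (μ i) - f (ν i) else 0)) * μ K
          ≤ f (μ K) * ∑ i : Fin n, (if (i : ℕ) < k then μ i - ν i else 0) := sum1
        _ ≤ f (μ K) * (ε * ∑ i : Fin n, (if (i : ℕ) < k then 0 else μ i)) := hc1
        _ = ε * (f (μ K) * ∑ i : Fin n, (if (i : ℕ) < k then 0 else μ i)) := by ring
        _ ≤ ε * (μ K * ∑ i : Fin n, (if (i : ℕ) < k then 0 else f (μ i))) := hc3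
        _ = (ε * ∑ i : Fin n, (if (i : ℕ) < k then 0 else f (μ i))) * μ K := by ring
    exact le_of_mul_le_mul_right hfin hK0

end NystromAux


/-- If `A ⪰ Â ⪰ 0` and the rank-`k` truncation of `Â` is a `(1+ε)`-near-optimal
rank-`k` approximation of `A` in nuclear norm, then for every continuous operator monotone
`f : [0,∞) → [0,∞)`, the rank-`k` truncation of `f(Â)` is a `(1+ε)`-near-optimal rank-`k`
approximation of `f(A)` in nuclear norm. -/
theorem nuclear_nystrom_to_funNystrom
    (n k : ℕ) (hk : 1 ≤ k) (hkn : k < n) (ε : ℝ) (hε : 0 ≤ ε)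
    (A Ahat U V : Matrix (Fin n) (Fin n) ℝ) (μ ν : Fin n → ℝ)
    (hA : A.PosSemidef) (hAhat : Ahat.PosSemidef) (hAAhat : (A - Ahat).PosSemidef)
    (hdecA : IsSpectralDecomp A U μ) (hdecAhat : IsSpectralDecomp Ahat V ν)
    (hnear : nuclearNorm (A - trunc k V ν) ≤ (1 + ε) * nuclearNorm (A - trunc k U μ))
    (f : ℝ → ℝ) (hfc : ContinuousOn f (Set.Ici 0)) (hfmono : OperatorMonotone f)
    (hfnn : ∀ x : ℝ, 0 ≤ x → 0 ≤ f x) :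
    nuclearNorm (U * Matrix.diagonal (f ∘ μ) * Uᵀ - trunc k V (f ∘ ν)) ≤
      (1 + ε) * nuclearNorm (U * Matrix.diagonal (f ∘ μ) * Uᵀ - trunc k U (f ∘ μ)) := by
  obtain ⟨hU, hμa, hAeq⟩ := hdecA
  obtain ⟨hV, hνa, hBeq⟩ := hdecAhat
  have hμ0 : ∀ i, 0 ≤ μ i := eigs_nonneg_of_decomp hA hU hAeq
  have hν0 : ∀ i, 0 ≤ ν i := eigs_nonneg_of_decomp hAhat hV hBeq
  have hwl : ∀ i, ν i ≤ μ i := weyl hU hV hAeq hBeq hμa hνa hAAhat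
  have hmono := mono_of_opmono f hfmono
  have hratio := ratio_lemma f hfnn hmono (c2w f hfmono hfnn)
  -- nonnegativity of various diagonal entries
  have hgν0 : ∀ i : Fin n, 0 ≤ (if (i : ℕ) < k then 0 else ν i) := fun i => by
    split_ifs; exacts [le_rfl, hν0 i]
  have hgμ0 : ∀ i : Fin n, 0 ≤ (if (i : ℕ) < k then 0 else μ i) := fun i => by
    split_ifs; exacts [le_rfl, hμ0 i]
  have hgfν0 : ∀ i : Fin n, 0 ≤ (if (i : ℕ) < k then 0 else f (ν i)) := fun i => by
    split_ifs; exacts [le_rfl, hfnn _ (hν0 i)]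
  have hgfμ0 : ∀ i : Fin n, 0 ≤ (if (i : ℕ) < k then 0 else f (μ i)) := fun i => by
    split_ifs; exacts [le_rfl, hfnn _ (hμ0 i)]
  -- trunc unfoldings
  have etU : trunc k U μ
      = U * Matrix.diagonal (fun i : Fin n => if (i : ℕ) < k then μ i else 0) * Uᵀ := rfl
  have etV : trunc k V ν
      = V * Matrix.diagonal (fun i : Fin n => if (i : ℕ) < k then ν i else 0) * Vᵀ := rfl
  have etfU : trunc k U (f ∘ μ)
      = U * Matrix.diagonal (fun i : Fin n => if (i : ℕ) < k then f (μ i) else 0) * Uᵀ := rfl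
  have etfV : trunc k V (f ∘ ν)
      = V * Matrix.diagonal (fun i : Fin n => if (i : ℕ) < k then f (ν i) else 0) * Vᵀ := rfl
  -- splitting lemma for decomposed matrices
  have esplit : ∀ (W : Matrix (Fin n) (Fin n) ℝ) (g : Fin n → ℝ),
      W * Matrix.diagonal g * Wᵀ
        = W * Matrix.diagonal (fun i : Fin n => if (i : ℕ) < k then g i else 0) * Wᵀ
          + W * Matrix.diagonal (fun i : Fin n => if (i : ℕ) < k then 0 else g i) * Wᵀ := by
    intro W g
    have hsum : Matrix.diagonal g
        = Matrix.diagonal (fun i : Fin n => if (i : ℕ) < k then g i else 0)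
          + Matrix.diagonal (fun i : Fin n => if (i : ℕ) < k then 0 else g i) := by
      ext i j
      simp only [Matrix.add_apply, Matrix.diagonal_apply]
      split_ifs <;> ring
    rw [hsum, Matrix.mul_add, Matrix.add_mul]
  have hfμcomp : Matrix.diagonal (f ∘ μ)
      = Matrix.diagonal (fun i : Fin n => f (μ i)) := rfl
  -- the four key matrix identities
  have e1 : A - trunc k U μ
      = U * Matrix.diagonal (fun i : Fin n => if (i : ℕ) < k then 0 else μ i) * Uᵀ := by
    rw [hAeq, etU, esplit U μ]
    exact add_sub_cancel_left _ _
  have e2 : Ahat - trunc k V ν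
      = V * Matrix.diagonal (fun i : Fin n => if (i : ℕ) < k then 0 else ν i) * Vᵀ := by
    rw [hBeq, etV, esplit V ν]
    exact add_sub_cancel_left _ _
  have e3 : U * Matrix.diagonal (f ∘ μ) * Uᵀ - trunc k U (f ∘ μ)
      = U * Matrix.diagonal (fun i : Fin n => if (i : ℕ) < k then 0 else f (μ i)) * Uᵀ := by
    rw [hfμcomp, etfU, esplit U (fun i => f (μ i))]
    exact add_sub_cancel_left _ _
  have e4 : V * Matrix.diagonal (f ∘ ν) * Vᵀ - trunc k V (f ∘ ν)
      = V * Matrix.diagonal (fun i : Fin n => if (i : ℕ) < k then 0 else f (ν i)) * Vᵀ := by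
    rw [show Matrix.diagonal (f ∘ ν) = Matrix.diagonal (fun i : Fin n => f (ν i)) from rfl,
      etfV, esplit V (fun i => f (ν i))]
    exact add_sub_cancel_left _ _
  -- PSD facts
  have pAtV : (A - trunc k V ν).PosSemidef := by
    rw [show A - trunc k V ν = (A - Ahat) + (Ahat - trunc k V ν) from
      (sub_add_sub_cancel _ _ _).symm, e2]
    exact hAAhat.add (psd_decomp V _ hgν0)
  have pAtU : (A - trunc k U μ).PosSemidef := by
    rw [e1]; exact psd_decomp U _ hgμ0
  have pFmono : (U * Matrix.diagonal (f ∘ μ) * Uᵀ - V * Matrix.diagonal (f ∘ ν) * Vᵀ).PosSemidef :=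
    hfmono n A Ahat U V μ ν ⟨hU, hμa, hAeq⟩ ⟨hV, hνa, hBeq⟩ hA hAhat hAAhat
  have pN : (U * Matrix.diagonal (f ∘ μ) * Uᵀ - trunc k V (f ∘ ν)).PosSemidef := by
    rw [show U * Matrix.diagonal (f ∘ μ) * Uᵀ - trunc k V (f ∘ ν)
        = (U * Matrix.diagonal (f ∘ μ) * Uᵀ - V * Matrix.diagonal (f ∘ ν) * Vᵀ)
          + (V * Matrix.diagonal (f ∘ ν) * Vᵀ - trunc k V (f ∘ ν)) from
      (sub_add_sub_cancel _ _ _).symm, e4]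
    exact pFmono.add (psd_decomp V _ hgfν0)
  have pM : (U * Matrix.diagonal (f ∘ μ) * Uᵀ - trunc k U (f ∘ μ)).PosSemidef := by
    rw [e3]; exact psd_decomp U _ hgfμ0
  -- traces
  have tA : A.trace = ∑ i, μ i := by rw [hAeq]; exact trace_decomp U μ hU
  have tF : (U * Matrix.diagonal (f ∘ μ) * Uᵀ).trace = ∑ i, f (μ i) := by
    rw [hfμcomp]; exact trace_decomp U _ hU
  have ttU : (trunc k U μ).trace = ∑ i : Fin n, (if (i : ℕ) < k then μ i else 0) := by
    rw [etU]; exact trace_decomp U _ hU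
  have ttV : (trunc k V ν).trace = ∑ i : Fin n, (if (i : ℕ) < k then ν i else 0) := by
    rw [etV]; exact trace_decomp V _ hV
  have ttfU : (trunc k U (f ∘ μ)).trace = ∑ i : Fin n, (if (i : ℕ) < k then f (μ i) else 0) := by
    rw [etfU]; exact trace_decomp U _ hU
  have ttfV : (trunc k V (f ∘ ν)).trace = ∑ i : Fin n, (if (i : ℕ) < k then f (ν i) else 0) := by
    rw [etfV]; exact trace_decomp V _ hV
  -- rewrite the near-optimality hypothesis
  rw [nuclearNorm_psd pAtV, nuclearNorm_psd pAtU, Matrix.trace_sub, Matrix.trace_sub,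
    tA, ttU, ttV] at hnear
  have hsplitμ := sum_split k μ
  have hsum' : (∑ i : Fin n, (if (i : ℕ) < k then μ i - ν i else 0))
      ≤ ε * ∑ i : Fin n, (if (i : ℕ) < k then 0 else μ i) := by
    rw [sum_ite_sub]
    nlinarith [hnear, hsplitμ]
  have hkey := key_scalar hkn f μ ν hμa hμ0 hν0 hwl hfnn hratio ε hε hsum'
  rw [sum_ite_sub] at hkey
  -- rewrite the goal
  rw [nuclearNorm_psd pN, nuclearNorm_psd pM, Matrix.trace_sub, Matrix.trace_sub,
    tF, ttfU, ttfV]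
  have hsplitfμ := sum_split k (fun i => f (μ i))
  nlinarith [hkey, hsplitfμ]
end

section
/- Let ε ∈ [0,1] and let λ₁ ≥ λ₂ ≥ … ≥ λ_k ≥ λ_{k+1} ≥ 0 be real numbers. Suppose λ̂₁, …, λ̂_k ≥ 0 satisfy 0 ≤ λᵢ − λ̂ᵢ ≤ ε·λ_{k+1} for every i = 1, …, k. Then for every nondecreasing concave function f : [0,∞) → [0,∞), 0 ≤ f(λᵢ) − f(λ̂ᵢ) ≤ ε·f(λ_{k+1}) for every i = 1, …, k. -/
lemma concave_increment_le {f : ℝ → ℝ} (hf : ConcaveOn ℝ (Set.Ici 0) f)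
    {x y d : ℝ} (hy : 0 ≤ y) (hd : 0 ≤ d) (hyx : y ≤ x) :
    f (x + d) + f y ≤ f x + f (y + d) := by
  have hx : 0 ≤ x := le_trans hy hyx
  rcases eq_or_lt_of_le (show y ≤ x + d by linarith) with h | h
  · have hxy : x = y := by linarith [hd, hyx]
    have hd0 : d = 0 := by linarith
    simp [hxy, hd0]
  · set L : ℝ := x + d - y with hL
    have hLpos : 0 < L := by simp [hL]; linarith
    have hmemy : y ∈ Set.Ici (0:ℝ) := hy
    have hmemxd : (x + d) ∈ Set.Ici (0:ℝ) := by simp; linarith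
    have ha : 0 ≤ (x - y)/L := div_nonneg (by linarith) hLpos.le
    have hb : 0 ≤ d/L := div_nonneg hd hLpos.le
    have hab : (x - y)/L + d/L = 1 := by rw [← add_div, hL]; field_simp [hLpos.ne']; ring
    have hba : d/L + (x - y)/L = 1 := by linarith
    have h1 : ((x - y)/L) • f (x+d) + (d/L) • f y ≤ f (((x - y)/L) • (x+d) + (d/L) • y) :=
      hf.2 hmemxd hmemy ha hb hab
    have h2 : (d/L) • f (x+d) + ((x - y)/L) • f y ≤ f ((d/L) • (x+d) + ((x - y)/L) • y) :=
      hf.2 hmemxd hmemy hb ha hba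
    have e1 : ((x - y)/L) • (x+d) + (d/L) • y = x := by
      simp only [smul_eq_mul]; field_simp [hLpos.ne']; rw [hL]; ring
    have e2 : (d/L) • (x+d) + ((x - y)/L) • y = y + d := by
      simp only [smul_eq_mul]; field_simp [hLpos.ne']; rw [hL]; ring
    rw [e1] at h1; rw [e2] at h2
    simp only [smul_eq_mul] at h1 h2
    have hkey : f (x+d) + f y =
        ((x - y)/L * f (x+d) + d/L * f y) + (d/L * f (x+d) + (x - y)/L * f y) := by
      linear_combination (f (x+d) + f y) * hab.symm
    linarith [h1, h2]

/-- Eigenvalue transfer: if `λ₁ ≥ … ≥ λ_k ≥ λ_{k+1} ≥ 0` and estimates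
`λ̂ᵢ ≥ 0` satisfy `0 ≤ λᵢ − λ̂ᵢ ≤ ε·λ_{k+1}` for `i = 1,…,k`, then for every nondecreasing
concave `f : [0,∞) → [0,∞)`, `0 ≤ f(λᵢ) − f(λ̂ᵢ) ≤ ε·f(λ_{k+1})` for `i = 1,…,k`. -/
theorem eigenvalue_transfer_additive
    (k : ℕ) (hk : 1 ≤ k) (ε : ℝ) (hε0 : 0 ≤ ε) (hε1 : ε ≤ 1)
    (lam : Fin (k + 1) → ℝ) (hlam : Antitone lam) (hlamnn : 0 ≤ lam (Fin.last k))
    (lamhat : Fin k → ℝ) (hlamhatnn : ∀ i, 0 ≤ lamhat i)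
    (happrox : ∀ i : Fin k, 0 ≤ lam i.castSucc - lamhat i ∧
      lam i.castSucc - lamhat i ≤ ε * lam (Fin.last k))
    (f : ℝ → ℝ) (hfmono : MonotoneOn f (Set.Ici 0)) (hfconc : ConcaveOn ℝ (Set.Ici 0) f)
    (hfnn : ∀ x : ℝ, 0 ≤ x → 0 ≤ f x) :
    ∀ i : Fin k, 0 ≤ f (lam i.castSucc) - f (lamhat i) ∧
      f (lam i.castSucc) - f (lamhat i) ≤ ε * f (lam (Fin.last k)) := by
  intro i
  set μ := lam (Fin.last k) with hμ
  set li := lam i.castSucc with hli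
  set h := lamhat i with hh
  obtain ⟨hd0, hdε⟩ := happrox i
  have hμli : μ ≤ li := hlam (Fin.le_last i.castSucc)
  have hh0 : 0 ≤ h := hlamhatnn i
  have hli0 : 0 ≤ li := le_trans hlamnn hμli
  -- lower bound
  have hlow : f h ≤ f li := hfmono hh0 hli0 (by linarith)
  refine ⟨by linarith, ?_⟩
  -- upper bound
  have hy0 : 0 ≤ (1 - ε) * μ := mul_nonneg (by linarith) hlamnn
  have hyh : (1 - ε) * μ ≤ h := by nlinarith
  have key := concave_increment_le hfconc (x := h) (y := (1 - ε) * μ)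
    (d := li - h) hy0 hd0 hyh
  have hxd : h + (li - h) = li := by ring
  rw [hxd] at key
  have hmono2 : f ((1 - ε) * μ + (li - h)) ≤ f μ := by
    apply hfmono (by simp; nlinarith) hlamnn
    nlinarith
  have hconc2 : (1 - ε) * f μ + ε * f 0 ≤ f ((1 - ε) * μ) := by
    have := hfconc.2 (Set.mem_Ici.mpr hlamnn) (Set.self_mem_Ici)
      (by linarith : (0:ℝ) ≤ 1 - ε) hε0 (by ring)
    simpa using this
  have hf0 : 0 ≤ f 0 := hfnn 0 le_rfl
  nlinarith [key, hmono2, hconc2, hf0, mul_nonneg hε0 hf0]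
end

section
/- Let p ≥ 1, let 1 ≤ k < n, and let λ₁ ≥ λ₂ ≥ … ≥ λₙ ≥ 0 be real numbers with λ_k > 0. Let δ₁, …, δ_k ∈ [0,1], let ε ≥ 0, and suppose Σ_{i=1}^{k} δᵢ λᵢ^p ≤ ε Σ_{j=k+1}^{n} λⱼ^p. Then for every concave function f : [0,∞) → [0,∞), Σ_{i=1}^{k} δᵢ f(λᵢ)^p ≤ ε Σ_{j=k+1}^{n} f(λⱼ)^p. -/
open BigOperators

/-- Ratio inequality for nonnegative concave functions: `y * f x ≤ x * f y` when `0 < y ≤ x`. -/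
lemma concave_ratio_aux (f : ℝ → ℝ) (hfconc : ConcaveOn ℝ (Set.Ici 0) f)
    (hfnn : ∀ x : ℝ, 0 ≤ x → 0 ≤ f x) {x y : ℝ} (hy : 0 < y) (hyx : y ≤ x) :
    y * f x ≤ x * f y := by
  have hx : 0 < x := lt_of_lt_of_le hy hyx
  set t := y / x with ht
  have ht0 : 0 ≤ t := div_nonneg hy.le hx.le
  have ht1 : t ≤ 1 := (div_le_one hx).2 hyx
  have key := hfconc.2 (Set.mem_Ici.2 hx.le) (Set.mem_Ici.2 le_rfl) ht0
    (by linarith : (0:ℝ) ≤ 1 - t) (by ring)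
  have hyt : t • x + (1 - t) • (0:ℝ) = y := by
    simp [ht, smul_eq_mul]
    field_simp
  rw [hyt] at key
  have hf0 : 0 ≤ f 0 := hfnn 0 le_rfl
  have : t * f x ≤ f y := by
    have := key
    simp only [smul_eq_mul] at this
    nlinarith
  calc y * f x = x * (t * f x) := by rw [ht]; field_simp
    _ ≤ x * f y := by nlinarith

/-- Key scalar inequality: if `λ₁ ≥ … ≥ λₙ ≥ 0` with `λ_k > 0`,
`δ₁,…,δ_k ∈ [0,1]`, `ε ≥ 0`, and `Σ_{i≤k} δᵢ λᵢ^p ≤ ε Σ_{j>k} λⱼ^p`, then for every concave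
`f : [0,∞) → [0,∞)`, `Σ_{i≤k} δᵢ f(λᵢ)^p ≤ ε Σ_{j>k} f(λⱼ)^p`. -/
theorem concave_weighted_power_sum_transfer
    (p : ℝ) (hp : 1 ≤ p) (n k : ℕ) (hk : 1 ≤ k) (hkn : k < n)
    (lam : Fin n → ℝ) (hlam : Antitone lam) (hlamnn : ∀ i, 0 ≤ lam i)
    (hlamk : 0 < lam ⟨k - 1, by omega⟩)
    (δ : Fin n → ℝ) (hδ : ∀ i : Fin n, (i : ℕ) < k → 0 ≤ δ i ∧ δ i ≤ 1)
    (ε : ℝ) (hε : 0 ≤ ε)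
    (hsum : ∑ i ∈ Finset.univ.filter (fun i : Fin n => (i : ℕ) < k), δ i * lam i ^ p ≤
      ε * ∑ j ∈ Finset.univ.filter (fun j : Fin n => k ≤ (j : ℕ)), lam j ^ p)
    (f : ℝ → ℝ) (hfconc : ConcaveOn ℝ (Set.Ici 0) f) (hfnn : ∀ x : ℝ, 0 ≤ x → 0 ≤ f x) :
    ∑ i ∈ Finset.univ.filter (fun i : Fin n => (i : ℕ) < k), δ i * f (lam i) ^ p ≤
      ε * ∑ j ∈ Finset.univ.filter (fun j : Fin n => k ≤ (j : ℕ)), f (lam j) ^ p := by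
  set kk : Fin n := ⟨k - 1, by omega⟩ with hkk
  set L : ℝ := lam kk with hL
  set c : ℝ := f L / L with hc
  have hLpos : 0 < L := hlamk
  have hc0 : 0 ≤ c := div_nonneg (hfnn L hLpos.le) hLpos.le
  -- f(lam i) ≤ c * lam i for i < k
  have hupper : ∀ i : Fin n, (i : ℕ) < k → f (lam i) ≤ c * lam i := by
    intro i hi
    have hle : L ≤ lam i := hlam (by simp [hkk, Fin.le_def]; omega)
    have := concave_ratio_aux f hfconc hfnn hLpos hle
    rw [hc, div_mul_eq_mul_div, le_div_iff₀ hLpos]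
    linarith
  -- c * lam j ≤ f (lam j) for k ≤ j
  have hlower : ∀ j : Fin n, k ≤ (j : ℕ) → c * lam j ≤ f (lam j) := by
    intro j hj
    have hle : lam j ≤ L := hlam (by simp [hkk, Fin.le_def]; omega)
    rcases eq_or_lt_of_le (hlamnn j) with h0 | hpos
    · rw [← h0, mul_zero]; exact hfnn 0 le_rfl
    · have := concave_ratio_aux f hfconc hfnn hpos hle
      rw [hc, div_mul_eq_mul_div, div_le_iff₀ hLpos]
      linarith
  -- powers
  have hpow_upper : ∀ i : Fin n, (i : ℕ) < k → f (lam i) ^ p ≤ c ^ p * lam i ^ p := by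
    intro i hi
    rw [← Real.mul_rpow hc0 (hlamnn i)]
    exact Real.rpow_le_rpow (hfnn _ (hlamnn i)) (hupper i hi) (by linarith)
  have hpow_lower : ∀ j : Fin n, k ≤ (j : ℕ) → c ^ p * lam j ^ p ≤ f (lam j) ^ p := by
    intro j hj
    rw [← Real.mul_rpow hc0 (hlamnn j)]
    exact Real.rpow_le_rpow (mul_nonneg hc0 (hlamnn j)) (hlower j hj) (by linarith)
  have hcp : 0 ≤ c ^ p := Real.rpow_nonneg hc0 p
  calc ∑ i ∈ Finset.univ.filter (fun i : Fin n => (i : ℕ) < k), δ i * f (lam i) ^ p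
      ≤ ∑ i ∈ Finset.univ.filter (fun i : Fin n => (i : ℕ) < k), δ i * (c ^ p * lam i ^ p) := by
        apply Finset.sum_le_sum
        intro i hi
        have hi' := (Finset.mem_filter.1 hi).2
        exact mul_le_mul_of_nonneg_left (hpow_upper i hi') (hδ i hi').1
    _ = c ^ p * ∑ i ∈ Finset.univ.filter (fun i : Fin n => (i : ℕ) < k), δ i * lam i ^ p := by
        rw [Finset.mul_sum]; apply Finset.sum_congr rfl; intros; ring
    _ ≤ c ^ p * (ε * ∑ j ∈ Finset.univ.filter (fun j : Fin n => k ≤ (j : ℕ)), lam j ^ p) :=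
        mul_le_mul_of_nonneg_left hsum hcp
    _ = ε * ∑ j ∈ Finset.univ.filter (fun j : Fin n => k ≤ (j : ℕ)), c ^ p * lam j ^ p := by
        rw [Finset.mul_sum, Finset.mul_sum, Finset.mul_sum]
        apply Finset.sum_congr rfl; intros; ring
    _ ≤ ε * ∑ j ∈ Finset.univ.filter (fun j : Fin n => k ≤ (j : ℕ)), f (lam j) ^ p := by
        apply mul_le_mul_of_nonneg_left _ hε
        apply Finset.sum_le_sum
        intro j hj
        exact hpow_lower j (Finset.mem_filter.1 hj).2
end
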